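/- Let f, g : V → ℝ^m be two general position maps such that their deformation cochain λ_{f,g} is defined, and let τ_1 × τ_2 be an (m−1)-cell of the deleted product (i.e., τ_1, τ_2 are disjoint simplices with dim τ_1 + dim τ_2 = m − 1). Then λ_{f,g}(τ_1 × τ_2) = (−1)^{(dim τ_1 + 1)(dim τ_2 + 1)} λ_{f,g}(τ_2 × τ_1). -/

import Mathlib

open Classical in
/-- The signed intersection number of two smooth parametrized surfaces
`φ : U → ℝ^n`, `ψ : W → ℝ^n` of complementary dimensions `k + l = n`: the sum over the
intersection points (pairs of parameters with equal image) of the sign of the determinant of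
the combined Jacobian; it is `0` when the intersection set is not finite. -/
noncomputable def surfInter {k l n : ℕ} (U : Set (Fin k → ℝ)) (W : Set (Fin l → ℝ))
    (φ : (Fin k → ℝ) → Fin n → ℝ) (ψ : (Fin l → ℝ) → Fin n → ℝ) : ℝ :=
  ∑ᶠ p ∈ {q : (Fin k → ℝ) × (Fin l → ℝ) | q.1 ∈ U ∧ q.2 ∈ W ∧ φ q.1 = ψ q.2},
    Real.sign (Matrix.det (Matrix.of fun (i j : Fin n) =>
      if hj : (j : ℕ) < k then fderiv ℝ φ p.1 (Pi.single (⟨(j : ℕ), hj⟩ : Fin k) 1) i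
      else if hj2 : (j : ℕ) - k < l then
        fderiv ℝ ψ p.2 (Pi.single (⟨(j : ℕ) - k, hj2⟩ : Fin l) 1) i
      else 0))

/-- The parameter domain for the ruled surface over an `(a-1)`-simplex: the first coordinate
is the time `t ∈ [0,1]`, the remaining coordinates are nonnegative barycentric coordinates
with sum at most `1`. -/
def simplexDom (a : ℕ) : Set (Fin a → ℝ) :=
  {w | (∀ j : Fin a, (j : ℕ) ≠ 0 → 0 ≤ w j) ∧
       (∑ j : Fin a, if (j : ℕ) = 0 then 0 else w j) ≤ 1 ∧
       ∀ h : 0 < a, 0 ≤ w ⟨0, h⟩ ∧ w ⟨0, h⟩ ≤ 1}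

open Classical in
/-- The ruled deformation surface `h_{f,g}(|A| × [0,1])`, parametrized: for the simplex with
vertex set the finset `A` (vertices in increasing order), the map sends the time coordinate
`t = w 0` and barycentric coordinates `w j` (`j ≠ 0`) to
`(t·f(x) + (1−t)·g(x), t)` where `x` is the corresponding point of `|A|`. -/
noncomputable def defSurf {N m : ℕ} (f g : Fin (N + 1) → Fin m → ℝ)
    (A : Finset (Fin (N + 1))) (w : Fin A.card → ℝ) : Fin (m + 1) → ℝ :=
  if h : 0 < A.card then
    Fin.snoc
      ((w ⟨0, h⟩) • (f (A.orderEmbOfFin rfl ⟨0, h⟩) +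
          ∑ j : Fin A.card, (if (j : ℕ) = 0 then 0 else w j) •
            (f (A.orderEmbOfFin rfl j) - f (A.orderEmbOfFin rfl ⟨0, h⟩)))
        + (1 - w ⟨0, h⟩) • (g (A.orderEmbOfFin rfl ⟨0, h⟩) +
          ∑ j : Fin A.card, (if (j : ℕ) = 0 then 0 else w j) •
            (g (A.orderEmbOfFin rfl j) - g (A.orderEmbOfFin rfl ⟨0, h⟩))))
      (w ⟨0, h⟩)
  else 0

/-- The deformation cochain `λ_{f,g}` evaluated on the cell `A × B` of the deleted product:
the signed intersection number of the ruled surfaces `h_{f,g}(|A| × [0,1])` and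
`h_{f,g}(|B| × [0,1])` in `ℝ^{m+1}`. -/
noncomputable def lam {N m : ℕ} (f g : Fin (N + 1) → Fin m → ℝ)
    (A B : Finset (Fin (N + 1))) : ℝ :=
  surfInter (n := m + 1) (simplexDom A.card) (simplexDom B.card) (defSurf f g A) (defSurf f g B)

open Classical in
/-- The intersection cocycle `φ_f(A × B) = (−1)^{dim A} ℐ(f(A), f(B))`, where `ℐ` is `0` if
the geometric simplices are disjoint and otherwise the sign of the determinant
`det((1,p),(1,f(a_1)),…,(1,f(a_k)),(1,f(b_1)),…,(1,f(b_ℓ)))` at an intersection point `p`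
(vertices listed in increasing order). -/
noncomputable def phi {N m : ℕ} (f : Fin (N + 1) → Fin m → ℝ)
    (A B : Finset (Fin (N + 1))) : ℝ :=
  (-1 : ℝ) ^ (A.card - 1) *
    (if h : ((convexHull ℝ (f '' (A : Set (Fin (N + 1))))) ∩
        (convexHull ℝ (f '' (B : Set (Fin (N + 1)))))).Nonempty then
      Real.sign (Matrix.det (Matrix.of fun (i j : Fin (m + 1)) =>
        (if (j : ℕ) = 0 then Fin.cons (1 : ℝ) h.some
         else if hj : (j : ℕ) < A.card then
           Fin.cons (1 : ℝ) (f (A.orderEmbOfFin rfl ⟨(j : ℕ), hj⟩))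
         else if hj2 : (j : ℕ) - A.card + 1 < B.card then
           Fin.cons (1 : ℝ) (f (B.orderEmbOfFin rfl ⟨(j : ℕ) - A.card + 1, hj2⟩))
         else 0 : Fin (m + 1) → ℝ) i))
    else 0)


open Fin.NatCast in
lemma rot_pow_apply (m : ℕ) : ∀ (b : ℕ) (i : Fin (m + 1)),
    ((finRotate (m + 1)) ^ b) i = i + (b : Fin (m + 1)) := by
  intro b
  induction b with
  | zero => intro i; simp
  | succ b ih =>
    intro i
    rw [pow_succ, Equiv.Perm.mul_apply, finRotate_succ_apply, ih]
    push_cast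
    rw [add_assoc, add_comm (1 : Fin (m + 1))]

open Fin.NatCast in
lemma det_rot {m a b : ℕ} (hab : a + b = m + 1) (ha : 0 < a) (hb : 0 < b)
    (C1 : Fin a → Fin (m + 1) → ℝ) (C2 : Fin b → Fin (m + 1) → ℝ) :
    Matrix.det (Matrix.of fun i j : Fin (m + 1) =>
      if hj : (j : ℕ) < a then C1 ⟨(j : ℕ), hj⟩ i
      else if hj2 : (j : ℕ) - a < b then C2 ⟨(j : ℕ) - a, hj2⟩ i else 0)
    = (-1 : ℝ) ^ (a * b) * Matrix.det (Matrix.of fun i j : Fin (m + 1) =>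
      if hj : (j : ℕ) < b then C2 ⟨(j : ℕ), hj⟩ i
      else if hj2 : (j : ℕ) - b < a then C1 ⟨(j : ℕ) - b, hj2⟩ i else 0) := by
  set M' : Matrix (Fin (m+1)) (Fin (m+1)) ℝ := Matrix.of fun i j : Fin (m + 1) =>
      if hj : (j : ℕ) < b then C2 ⟨(j : ℕ), hj⟩ i
      else if hj2 : (j : ℕ) - b < a then C1 ⟨(j : ℕ) - b, hj2⟩ i else 0 with hM'
  have key : (Matrix.of fun i j : Fin (m + 1) =>
      if hj : (j : ℕ) < a then C1 ⟨(j : ℕ), hj⟩ i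
      else if hj2 : (j : ℕ) - a < b then C2 ⟨(j : ℕ) - a, hj2⟩ i else 0)
      = M'.submatrix id ((finRotate (m + 1)) ^ b) := by
    ext i j
    have hbv : ((b : Fin (m+1)) : ℕ) = b := by
      rw [Fin.val_natCast]; exact Nat.mod_eq_of_lt (by omega)
    have hτ : ((((finRotate (m + 1)) ^ b) j : Fin (m+1)) : ℕ) = ((j : ℕ) + b) % (m + 1) := by
      rw [rot_pow_apply, Fin.val_add, hbv]
    have hj1 := j.isLt
    simp only [Matrix.submatrix_apply, id_eq, Matrix.of_apply, hM']
    by_cases hj : (j : ℕ) < a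
    · have hmod : ((j : ℕ) + b) % (m + 1) = (j : ℕ) + b := Nat.mod_eq_of_lt (by omega)
      rw [dif_pos hj, dif_neg (by omega), dif_pos (by omega)]
      congr 1
      ext
      simp [hτ, hmod]
    · have hmod : ((j : ℕ) + b) % (m + 1) = (j : ℕ) - a := by
        rw [Nat.mod_eq_sub_mod (by omega), Nat.mod_eq_of_lt (by omega)]
        omega
      rw [dif_neg hj, dif_pos (show (j : ℕ) - a < b by omega), dif_pos (by omega)]
      congr 1
      ext
      simp [hτ, hmod]
  rw [key, Matrix.det_permute', map_pow, sign_finRotate]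
  have hsign : (((-1 : ℤˣ) ^ m) ^ b : ℝ) = (-1 : ℝ) ^ (a * b) := by
    push_cast
    rw [← pow_mul]
    have h1 : m * b = a * b + b * (b - 1) := by
      rcases Nat.exists_eq_add_of_lt hb with ⟨c, rfl⟩
      have hm : m = a + c := by omega
      subst hm
      simp [Nat.add_sub_cancel]
      ring
    rw [h1, pow_add, (Nat.even_mul_pred_self b).neg_one_pow, mul_one]
  rw [← hsign]
  push_cast
  ring

lemma sign_neg_one_pow_mul (k : ℕ) (x : ℝ) :
    Real.sign ((-1 : ℝ) ^ k * x) = (-1 : ℝ) ^ k * Real.sign x := by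
  rcases Nat.even_or_odd k with h | h
  · rw [h.neg_one_pow]; simp
  · rw [h.neg_one_pow]; simp [Real.sign_neg]

/-- For general position maps `f, g` (with their union in general position and
`f(i) = g(j)` only for `i = j`) and an `(m−1)`-cell `A × B` of the deleted product
(disjoint nonempty vertex sets with `dim A + dim B = m − 1`), the deformation cochain
satisfies `λ_{f,g}(A × B) = (−1)^{(dim A + 1)(dim B + 1)} λ_{f,g}(B × A)`. -/
theorem stmt13 (m N : ℕ) (f g : Fin (N + 1) → Fin m → ℝ)
    (hinj : ∀ i j, f i = g j → i = j)
    (hgp : ∀ S : Finset (Fin m → ℝ), (S : Set (Fin m → ℝ)) ⊆ Set.range f ∪ Set.range g →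
      S.card ≤ m + 1 → AffineIndependent ℝ (fun p : {y // y ∈ S} => p.1))
    (A B : Finset (Fin (N + 1))) (hA : A.Nonempty) (hB : B.Nonempty)
    (hdisj : Disjoint A B) (hdim : A.card + B.card = m + 1) :
    lam f g A B = (-1 : ℝ) ^ (A.card * B.card) * lam f g B A := by
  have ha : 0 < A.card := hA.card_pos
  have hb : 0 < B.card := hB.card_pos
  unfold lam surfInter
  rw [mul_finsum_mem]
  refine finsum_mem_eq_of_bijOn Prod.swap ⟨?_, ?_, ?_⟩ ?_
  · intro p hp
    exact ⟨hp.2.1, hp.1, hp.2.2.symm⟩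
  · exact fun x _ y _ h => Prod.swap_injective h
  · intro q hq
    exact ⟨q.swap, ⟨hq.2.1, hq.1, hq.2.2.symm⟩, Prod.swap_swap q⟩
  · intro p hp
    simp only [Prod.fst_swap, Prod.snd_swap]
    rw [det_rot hdim ha hb
        (fun v i => fderiv ℝ (defSurf f g A) p.1 (Pi.single v 1) i)
        (fun v i => fderiv ℝ (defSurf f g B) p.2 (Pi.single v 1) i),
      sign_neg_one_pow_mul]
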